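/- (Anti-normal form) Every strongly positive element of Thompson's group F can be expressed uniquely in the form x_{i_n} ⋯ x_{i_2} x_{i_1}, where n ≥ 0, each i_k ≥ 1, and i_{k+1} ≥ i_k − 1 for all 1 ≤ k ≤ n − 1. -/

import Mathlib

/-- The defining relations of Thompson's group `F`:
`xₙ xₖ (xₖ xₙ₊₁)⁻¹` for all `k < n`. -/
def thompsonRels : Set (FreeGroup ℕ) :=
  {r | ∃ n k : ℕ, k < n ∧
    r = FreeGroup.of n * FreeGroup.of k * (FreeGroup.of k * FreeGroup.of (n + 1))⁻¹}

/-- Thompson's group `F` as a presented group. -/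
abbrev ThompsonF : Type := PresentedGroup thompsonRels

/-- The generator `xₙ` of Thompson's group `F`. -/
def xF (n : ℕ) : ThompsonF := PresentedGroup.of n

/-- Word length of `g` with respect to `{x₀, x₁}`: the least `m` such that `g`
is a product of `m` elements of `{x₀, x₁} ∪ {x₀, x₁}⁻¹`. -/
noncomputable def wordLength (g : ThompsonF) : ℕ :=
  sInf {m | ∃ l : List ThompsonF, l.length = m ∧
    (∀ a ∈ l, a ∈ ({xF 0, xF 1} : Set ThompsonF) ∨ a⁻¹ ∈ ({xF 0, xF 1} : Set ThompsonF)) ∧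
    l.prod = g}

/-- The strongly positive monoid of Thompson's group `F`: the submonoid
generated by `{x₁, x₂, …}`. -/
def stronglyPosMonoid : Submonoid ThompsonF :=
  Submonoid.closure (Set.range fun n : ℕ => xF (n + 1))

def psi (i : ℕ) : Equiv.Perm ℚ where
  toFun t := if t ≤ i then t else if t ≤ i + 2 then (t + i) / 2 else t - 1
  invFun t := if t ≤ i then t else if t ≤ i + 1 then 2 * t - i else t + 1
  left_inv t := by
    simp only []
    split_ifs <;> push_cast at * <;> linarith
  right_inv t := by
    simp only []
    split_ifs <;> push_cast at * <;> linarith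

lemma psi_apply (i : ℕ) (t : ℚ) :
    psi i t = if t ≤ i then t else if t ≤ i + 2 then (t + i) / 2 else t - 1 := rfl

set_option maxHeartbeats 2000000 in
lemma psi_rel {k n : ℕ} (h : k < n) : psi n * psi k = psi k * psi (n + 1) := by
  have hq : (k : ℚ) + 1 ≤ n := by exact_mod_cast h
  ext t
  simp only [Equiv.Perm.mul_apply, psi_apply, Nat.cast_add, Nat.cast_one]
  split_ifs <;> linarith

lemma psi_ge (i : ℕ) (t : ℚ) : t - 1 ≤ psi i t := by
  rw [psi_apply]; split_ifs <;> linarith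

lemma psi_eq_of_ge {i : ℕ} {t : ℚ} (h : (i : ℚ) + 2 ≤ t) : psi i t = t - 1 := by
  rw [psi_apply]; split_ifs <;> linarith

lemma psi_gt_of_lt {i : ℕ} {t : ℚ} (h : t < (i : ℚ) + 2) : t - 1 < psi i t := by
  rw [psi_apply]; split_ifs <;> linarith

/-- Product of the permutations attached to a list. -/
def prodPsi (l : List ℕ) : Equiv.Perm ℚ := (l.map psi).prod

@[simp] lemma prodPsi_nil : prodPsi [] = 1 := rfl
@[simp] lemma prodPsi_cons (a : ℕ) (l : List ℕ) : prodPsi (a :: l) = psi a * prodPsi l := by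
  simp [prodPsi]

lemma prodPsi_eq_of_ge : ∀ (l : List ℕ), List.Chain' (fun a b => b ≤ a + 1) l →
    ∀ t : ℚ, (l.headI : ℚ) + l.length + 1 ≤ t → prodPsi l t = t - l.length
  | [], _, t, _ => by simp
  | [a], _, t, ht => by
    simp only [List.headI, List.length_cons, List.length_nil, Nat.cast_zero, Nat.cast_one,
      prodPsi_cons, prodPsi_nil, mul_one] at *
    push_cast at ht
    rw [psi_eq_of_ge (by linarith)]
    norm_num
  | a :: b :: l, hc, t, ht => by
    have hab : b ≤ a + 1 := (List.isChain_cons_cons.1 hc).1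
    have habq : (b : ℚ) ≤ a + 1 := by exact_mod_cast hab
    have hc' : List.Chain' (fun a b => b ≤ a + 1) (b :: l) := (List.isChain_cons_cons.1 hc).2
    have hlen : ((a :: b :: l).length : ℚ) = ((b :: l).length : ℚ) + 1 := by
      push_cast [List.length_cons]; ring
    simp only [List.headI, List.length_cons] at ht ⊢
    have ht' : ((b :: l).headI : ℚ) + (b :: l).length + 1 ≤ t := by
      simp only [List.headI, List.length_cons]
      push_cast at ht ⊢
      linarith
    have ih := prodPsi_eq_of_ge (b :: l) hc' t ht'
    simp only [prodPsi_cons, Equiv.Perm.mul_apply] at ih ⊢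
    rw [ih]
    simp only [List.length_cons] at *
    push_cast at *
    rw [psi_eq_of_ge (by linarith)]
    ring

lemma prodPsi_gt_of_lt : ∀ (l : List ℕ), l ≠ [] → List.Chain' (fun a b => b ≤ a + 1) l →
    ∀ t : ℚ, t < (l.headI : ℚ) + l.length + 1 → t - l.length < prodPsi l t
  | [], h, _, _, _ => absurd rfl h
  | [a], _, _, t, ht => by
    simp only [List.headI, List.length_cons, List.length_nil, Nat.cast_zero, Nat.cast_one,
      prodPsi_cons, prodPsi_nil, mul_one] at *
    push_cast at ht
    exact psi_gt_of_lt (by linarith)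
  | a :: b :: l, _, hc, t, ht => by
    have hab : b ≤ a + 1 := (List.isChain_cons_cons.1 hc).1
    have habq : (b : ℚ) ≤ a + 1 := by exact_mod_cast hab
    have hc' : List.Chain' (fun a b => b ≤ a + 1) (b :: l) := (List.isChain_cons_cons.1 hc).2
    simp only [prodPsi_cons, Equiv.Perm.mul_apply, List.length_cons] at ht ⊢
    simp only [List.headI] at ht
    rcases lt_or_ge t (((b :: l).headI : ℚ) + (b :: l).length + 1) with h1 | h1
    · have ih := prodPsi_gt_of_lt (b :: l) (by simp) hc' t h1
      simp only [prodPsi_cons, Equiv.Perm.mul_apply, List.length_cons] at ih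
      have h2 := psi_ge a ((psi b) (prodPsi l t))
      push_cast at *
      linarith
    · have heq := prodPsi_eq_of_ge (b :: l) hc' t h1
      simp only [prodPsi_cons, Equiv.Perm.mul_apply, List.length_cons] at heq
      rw [heq]
      have h3 : (t - ((b :: l).length : ℚ)) - 1 < psi a (t - ((b :: l).length : ℚ)) := by
        apply psi_gt_of_lt
        simp only [List.length_cons] at *
        push_cast at *
        linarith
      simp only [List.length_cons] at *
      push_cast at *
      linarith

lemma prodPsi_ne_one (b : ℕ) (m' : List ℕ) (hm : List.Chain' (fun a b => b ≤ a + 1) (b :: m')) :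
    prodPsi (b :: m') ≠ 1 := by
  intro hp
  set t : ℚ := ((b :: m').headI : ℚ) + (b :: m').length + 1 with htdef
  have h1 := prodPsi_eq_of_ge (b :: m') hm t le_rfl
  rw [hp] at h1
  simp only [Equiv.Perm.one_apply, List.length_cons] at h1
  have h0 : (0:ℚ) ≤ (m'.length : ℚ) := Nat.cast_nonneg _
  push_cast at h1
  linarith

lemma prodPsi_injOn : ∀ (l m : List ℕ), List.Chain' (fun a b => b ≤ a + 1) l →
    List.Chain' (fun a b => b ≤ a + 1) m → prodPsi l = prodPsi m → l = m := by
  intro l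
  induction l with
  | nil =>
    intro m _ hm hp
    cases m with
    | nil => rfl
    | cons b m' => exact absurd (by simpa using hp.symm) (prodPsi_ne_one b m' hm)
  | cons a l' ih =>
    intro m hl hm hp
    cases m with
    | nil => exact absurd (by simpa using hp) (prodPsi_ne_one a l' hl)
    | cons b m' =>
      have hmx := le_max_left (((a :: l').headI : ℚ) + (a :: l').length)
          (((b :: m').headI : ℚ) + (b :: m').length)
      have hmx' := le_max_right (((a :: l').headI : ℚ) + (a :: l').length)
          (((b :: m').headI : ℚ) + (b :: m').length)
      set t : ℚ := max (((a :: l').headI : ℚ) + (a :: l').length)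
          (((b :: m').headI : ℚ) + (b :: m').length) + 1 with htdef
      have h1 := prodPsi_eq_of_ge (a :: l') hl t (by linarith)
      have h2 := prodPsi_eq_of_ge (b :: m') hm t (by linarith)
      rw [hp] at h1
      rw [h2] at h1
      have hlenq : ((a :: l').length : ℚ) = ((b :: m').length : ℚ) := by linarith
      have hlen : (a :: l').length = (b :: m').length := by exact_mod_cast hlenq
      have hab : a = b := by
        by_contra hne
        rcases Nat.lt_or_ge a b with h | h
        · set s : ℚ := ((a :: l').headI : ℚ) + (a :: l').length + 1 with hsdef
          have k1 := prodPsi_eq_of_ge (a :: l') hl s le_rfl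
          have k2 := prodPsi_gt_of_lt (b :: m') (by simp) hm s (by
            have hba : (a : ℚ) < b := by exact_mod_cast h
            simp only [hsdef, List.headI, ← hlenq]
            linarith)
          rw [← hp, k1, ← hlenq] at k2
          exact absurd rfl (ne_of_gt k2)
        · have h' : b < a := lt_of_le_of_ne h (fun e => hne e.symm)
          set s : ℚ := ((b :: m').headI : ℚ) + (b :: m').length + 1 with hsdef
          have k1 := prodPsi_eq_of_ge (b :: m') hm s le_rfl
          have k2 := prodPsi_gt_of_lt (a :: l') (by simp) hl s (by
            have hba : (b : ℚ) < a := by exact_mod_cast h'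
            simp only [hsdef, List.headI, hlenq]
            linarith)
          rw [hp, k1, hlenq] at k2
          exact absurd rfl (ne_of_gt k2)
      subst hab
      have htail : prodPsi l' = prodPsi m' := by
        have h3 : psi a * prodPsi l' = psi a * prodPsi m' := by
          simpa [prodPsi_cons] using hp
        exact mul_left_cancel h3
      rw [ih m' hl.tail hm.tail htail]

theorem xF_rel {k n : ℕ} (h : k < n) : xF n * xF k = xF k * xF (n + 1) := by
  have hr : (FreeGroup.of n * FreeGroup.of k *
      (FreeGroup.of k * FreeGroup.of (n + 1))⁻¹ : FreeGroup ℕ) ∈ thompsonRels :=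
    ⟨n, k, h, rfl⟩
  have h1 : PresentedGroup.mk thompsonRels
      (FreeGroup.of n * FreeGroup.of k * (FreeGroup.of k * FreeGroup.of (n + 1))⁻¹) = 1 :=
    (QuotientGroup.eq_one_iff _).2 (Subgroup.subset_normalClosure hr)
  simp only [map_mul, map_inv] at h1
  have h2 := mul_eq_one_iff_eq_inv.1 h1
  rw [inv_inv] at h2
  exact h2

lemma psi_cond : ∀ r ∈ thompsonRels, FreeGroup.lift psi r = 1 := by
  rintro r ⟨n, k, hk, rfl⟩
  simp only [map_mul, map_inv, FreeGroup.lift_apply_of]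
  rw [psi_rel hk]
  group

/-- The realization of Thompson's group on `ℚ`. -/
noncomputable def piF : ThompsonF →* Equiv.Perm ℚ := PresentedGroup.toGroup psi_cond

lemma piF_xF (i : ℕ) : piF (xF i) = psi i := PresentedGroup.toGroup.of psi_cond

lemma piF_prod (l : List ℕ) : piF ((l.map xF).prod) = prodPsi l := by
  have hc : ⇑piF ∘ xF = psi := funext piF_xF
  rw [map_list_prod, List.map_map, hc, prodPsi]

/-- Insertion of a generator into an anti-normal list. -/
def ins (a : ℕ) : List ℕ → List ℕ
  | [] => [a]
  | b :: t => if b ≤ a + 1 then a :: b :: t else (b - 1) :: ins a t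

lemma ins_ne_nil (a : ℕ) (l : List ℕ) : ins a l ≠ [] := by
  cases l with
  | nil => simp [ins]
  | cons b t => rw [ins]; split_ifs <;> simp

lemma ins_pos {a : ℕ} (ha : 1 ≤ a) : ∀ {l : List ℕ}, (∀ i ∈ l, 1 ≤ i) → ∀ i ∈ ins a l, 1 ≤ i
  | [], _, i, hi => by simp [ins] at hi; omega
  | b :: t, hl, i, hi => by
    rw [ins] at hi
    split_ifs at hi with hba
    · rcases List.mem_cons.1 hi with h | h
      · omega
      · exact hl i h
    · rcases List.mem_cons.1 hi with h | h
      · have := hl b List.mem_cons_self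
        omega
      · exact ins_pos ha (fun j hj => hl j (List.mem_cons_of_mem b hj)) i h

lemma ins_headI (a : ℕ) : ∀ l : List ℕ, (ins a l).headI ≤ max a (l.headI - 1)
  | [] => by simp [ins]
  | b :: t => by
    rw [ins]
    split_ifs with hba
    · simp
    · simp only [List.headI]
      omega

lemma ins_chain {a : ℕ} : ∀ {l : List ℕ}, List.Chain' (fun x y => y ≤ x + 1) l →
    List.Chain' (fun x y => y ≤ x + 1) (ins a l)
  | [], _ => by rw [ins]; exact List.isChain_singleton a
  | b :: t, hl => by
    rw [ins]
    split_ifs with hba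
    · exact List.isChain_cons_cons.2 ⟨hba, hl⟩
    · have htail := ins_chain (a := a) (l := t) hl.tail
      refine List.isChain_cons.2 ⟨?_, htail⟩
      intro y hy
      have hh := ins_headI a t
      have hbound : t.headI ≤ b + 1 := by
        cases t with
        | nil => simp
        | cons c u => exact (List.isChain_cons_cons.1 hl).1
      cases hins : ins a t with
      | nil => exact absurd hins (ins_ne_nil a t)
      | cons c' u' =>
        rw [hins] at hy
        simp only [List.head?_cons, Option.mem_some_iff] at hy
        subst hy
        rw [hins] at hh
        simp only [List.headI_cons] at hh
        omega

lemma ins_prod {a : ℕ} (ha : 1 ≤ a) : ∀ {l : List ℕ}, (∀ i ∈ l, 1 ≤ i) →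
    ((ins a l).map xF).prod = xF a * (l.map xF).prod
  | [], _ => by simp [ins]
  | b :: t, hl => by
    rw [ins]
    split_ifs with hba
    · simp [List.prod_cons]
    · have hb1 : 1 ≤ b := hl b (by simp)
      have hab : a < b - 1 := by omega
      have hrel := xF_rel hab
      have hb : b - 1 + 1 = b := by omega
      rw [hb] at hrel
      have ih := ins_prod ha (fun j hj => hl j (List.mem_cons_of_mem b hj))
      simp only [List.map_cons, List.prod_cons, ih, ← mul_assoc, hrel]

lemma exists_anti : ∀ l : List ℕ, (∀ i ∈ l, 1 ≤ i) →
    ∃ m : List ℕ, (∀ i ∈ m, 1 ≤ i) ∧ List.Chain' (fun x y => y ≤ x + 1) m ∧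
      ((m.map xF).prod = (l.map xF).prod)
  | [], _ => ⟨[], by simp, List.isChain_nil, rfl⟩
  | a :: t, hl => by
    obtain ⟨m, hm1, hm2, hm3⟩ := exists_anti t (fun j hj => hl j (List.mem_cons_of_mem a hj))
    have ha : 1 ≤ a := hl a (by simp)
    exact ⟨ins a m, ins_pos ha hm1, ins_chain hm2,
      by rw [ins_prod ha hm1, hm3]; simp [List.prod_cons]⟩

theorem anti_normal_form (f : ThompsonF) (hf : f ∈ stronglyPosMonoid) :
    ∃! l : List ℕ, (∀ i ∈ l, 1 ≤ i) ∧
      List.Chain' (fun a b => b ≤ a + 1) l ∧ (l.map xF).prod = f := by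
  have hrep : ∃ l : List ℕ, (∀ i ∈ l, 1 ≤ i) ∧ (l.map xF).prod = f := by
    refine Submonoid.closure_induction ?_ ?_ ?_ hf
    · rintro x ⟨n, rfl⟩
      exact ⟨[n + 1], by simp, by simp⟩
    · exact ⟨[], by simp, rfl⟩
    · rintro x y _ _ ⟨l₁, h₁, rfl⟩ ⟨l₂, h₂, rfl⟩
      refine ⟨l₁ ++ l₂, ?_, by simp⟩
      intro i hi
      rcases List.mem_append.1 hi with h | h
      · exact h₁ i h
      · exact h₂ i h
  obtain ⟨l, hl1, hl2⟩ := hrep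
  obtain ⟨m, hm1, hm2, hm3⟩ := exists_anti l hl1
  refine ⟨m, ⟨hm1, hm2, by rw [hm3, hl2]⟩, ?_⟩
  rintro y ⟨_, hy2, hy3⟩
  apply prodPsi_injOn y m hy2 hm2
  have : (y.map xF).prod = (m.map xF).prod := by rw [hy3, hm3, hl2]
  rw [← piF_prod, ← piF_prod, this]
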